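/- arXiv:1509.08571 — 2 statements merged into one kernel-verified Lean document; each statement's English description precedes it below -/
import Mathlib

section
/- Bob's side information is irrelevant for the values Alice can guarantee with high probability: v_sup^w(p, 𝒯_A, 𝒯_B) = v_sup^w(p, 𝒯_A, 𝟙) and v_sup^s(p, 𝒯_A, 𝒯_B) = v_sup^s(p, 𝒯_A, 𝟙); i.e., from Alice's perspective it is always as if Bob knows the state perfectly. -/
open Finset

/-- A behavioral strategy in the `n`-stage repeated game: at stage `i`, given the history of
past actions of both players (only the first `i` coordinates of the supplied sequences matter,
as enforced by `causal`) and the player's side information `si`, it assigns a probability to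
each action `x`. -/
structure BehavStrategy (A B SI Act : Type*) [Fintype A] [Fintype B] [Fintype Act] (n : ℕ) where
  prob : Fin n → (Fin n → A) → (Fin n → B) → SI → Act → ℝ
  nonneg : ∀ i ha hb si x, 0 ≤ prob i ha hb si x
  sum_one : ∀ i ha hb si, ∑ x, prob i ha hb si x = 1
  causal : ∀ (i : Fin n) (ha ha' : Fin n → A) (hb hb' : Fin n → B) (si : SI),
    (∀ j : Fin n, (j : ℕ) < (i : ℕ) → ha j = ha' j) →
    (∀ j : Fin n, (j : ℕ) < (i : ℕ) → hb j = hb' j) →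
    prob i ha hb si = prob i ha' hb' si

variable {S SA SB A B : Type*} [Fintype S] [Fintype A] [Fintype B]

/-- The probability that the state is `s` and the action sequences are `a, b`, under prior `p`,
side-information maps `TA, TB`, and behavioral strategies `α` (Alice) and `β` (Bob). -/
noncomputable def inducedP (p : S → ℝ) (TA : S → SA) (TB : S → SB) {n : ℕ}
    (α : BehavStrategy A B SA A n) (β : BehavStrategy A B SB B n)
    (s : S) (a : Fin n → A) (b : Fin n → B) : ℝ :=
  p s * ∏ i, (α.prob i a b (TA s) (a i) * β.prob i a b (TB s) (b i))

/-- Alice's time-average payoff `σ_n`. -/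
noncomputable def avgPay (g : S → A → B → ℝ) {n : ℕ} (s : S) (a : Fin n → A) (b : Fin n → B) : ℝ :=
  (n : ℝ)⁻¹ * ∑ i, g s (a i) (b i)

open scoped Classical in
/-- `P(σ_n < v)` under the induced distribution. -/
noncomputable def probBelow (g : S → A → B → ℝ) (p : S → ℝ) (TA : S → SA) (TB : S → SB)
    {n : ℕ} (α : BehavStrategy A B SA A n) (β : BehavStrategy A B SB B n) (v : ℝ) : ℝ :=
  ∑ s : S, ∑ a : Fin n → A, ∑ b : Fin n → B,
    if avgPay g s a b < v then inducedP p TA TB α β s a b else 0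

/-- Alice strongly guarantees `v`. -/
def StronglyGuarantees (g : S → A → B → ℝ) (p : S → ℝ) (TA : S → SA) (TB : S → SB)
    (v : ℝ) : Prop :=
  ∀ ε : ℝ, 0 < ε → ∃ N : ℕ, ∀ n : ℕ, N < n → ∃ α : BehavStrategy A B SA A n,
    ∀ β : BehavStrategy A B SB B n, probBelow g p TA TB α β v < ε

/-- Alice weakly guarantees `v`. -/
def WeaklyGuarantees (g : S → A → B → ℝ) (p : S → ℝ) (TA : S → SA) (TB : S → SB)
    (v : ℝ) : Prop :=
  ∀ ε : ℝ, 0 < ε → ∃ N : ℕ, ∀ n : ℕ, N < n → ∀ β : BehavStrategy A B SB B n,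
    ∃ α : BehavStrategy A B SA A n, probBelow g p TA TB α β v < ε

/-- `v_sup^s`, the supremum of strongly guaranteeable values. -/
noncomputable def vsupS (g : S → A → B → ℝ) (p : S → ℝ) (TA : S → SA) (TB : S → SB) : ℝ :=
  sSup {v : ℝ | StronglyGuarantees g p TA TB v}

/-- `v_sup^w`, the supremum of weakly guaranteeable values. -/
noncomputable def vsupW (g : S → A → B → ℝ) (p : S → ℝ) (TA : S → SA) (TB : S → SB) : ℝ :=
  sSup {v : ℝ | WeaklyGuarantees g p TA TB v}

/-- `u(q)`: the value of the one-stage game with averaged payoff table `∑ s, q s • g s`. -/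
noncomputable def uVal (g : S → A → B → ℝ) (q : S → ℝ) : ℝ :=
  ⨆ x : {x : A → ℝ // (∀ a, 0 ≤ x a) ∧ ∑ a, x a = 1},
    ⨅ b : B, ∑ s : S, ∑ a : A, q s * x.1 a * g s a b

/-- Expected time-average payoff `E[σ_n]`. -/
noncomputable def expPay (g : S → A → B → ℝ) (p : S → ℝ) (TA : S → SA) (TB : S → SB)
    {n : ℕ} (α : BehavStrategy A B SA A n) (β : BehavStrategy A B SB B n) : ℝ :=
  ∑ s : S, ∑ a : Fin n → A, ∑ b : Fin n → B,
    inducedP p TA TB α β s a b * avgPay g s a b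

/-- `V_n(q)`: the maximin expected average payoff of the `n`-stage game with prior `q`,
no side information for Alice and full information for Bob. -/
noncomputable def Vn (g : S → A → B → ℝ) (q : S → ℝ) (n : ℕ) : ℝ :=
  ⨆ α : BehavStrategy A B Unit A n, ⨅ β : BehavStrategy A B S B n,
    expPay g q (fun _ => ()) (id : S → S) α β

/-! ### Auxiliary machinery for `stmt4` -/

open scoped Classical

/-- Partial product of Bob's behavioral probabilities, up to (excluding) stage `m`. -/
noncomputable def PiB {n : ℕ} (β : BehavStrategy A B S B n)
    (ha : Fin n → A) (hb : Fin n → B) (s : S) (m : ℕ) : ℝ :=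
  ∏ j : Fin n, if (j : ℕ) < m then β.prob j ha hb s (hb j) else 1

noncomputable def DB (p : S → ℝ) (TB : S → SB) {n : ℕ} (β : BehavStrategy A B S B n)
    (ha : Fin n → A) (hb : Fin n → B) (t : SB) (m : ℕ) : ℝ :=
  ∑ s : S, if TB s = t then p s * PiB β ha hb s m else 0

lemma PiB_nonneg {n : ℕ} (β : BehavStrategy A B S B n)
    (ha : Fin n → A) (hb : Fin n → B) (s : S) (m : ℕ) : 0 ≤ PiB β ha hb s m := by
  refine Finset.prod_nonneg fun j _ => ?_
  split
  · exact β.nonneg j ha hb s (hb j)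
  · exact zero_le_one

lemma DB_nonneg (p : S → ℝ) (hp : ∀ s, 0 ≤ p s) (TB : S → SB) {n : ℕ}
    (β : BehavStrategy A B S B n) (ha : Fin n → A) (hb : Fin n → B) (t : SB) (m : ℕ) :
    0 ≤ DB p TB β ha hb t m := by
  refine Finset.sum_nonneg fun s _ => ?_
  split
  · exact mul_nonneg (hp s) (PiB_nonneg β ha hb s m)
  · exact le_rfl

lemma prod_if_succ {n : ℕ} (f : Fin n → ℝ) (m : ℕ) (hm : m < n) :
    (∏ j : Fin n, if (j : ℕ) < m + 1 then f j else 1)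
      = (∏ j : Fin n, if (j : ℕ) < m then f j else 1) * f ⟨m, hm⟩ := by
  have h : ∀ j : Fin n,
      (if (j : ℕ) < m + 1 then f j else 1)
        = (if (j : ℕ) < m then f j else 1) * (if j = ⟨m, hm⟩ then f j else 1) := by
    intro j
    by_cases h1 : (j : ℕ) < m
    · have hne : j ≠ ⟨m, hm⟩ := by
        intro h
        rw [h] at h1
        simp at h1
      simp [h1, Nat.lt_succ_of_lt h1, hne]
    · by_cases h2 : j = ⟨m, hm⟩
      · subst h2; simp
      · have hne' : (j : ℕ) ≠ m := fun h => h2 (Fin.ext h)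
        have h3 : ¬ (j : ℕ) < m + 1 := by omega
        simp [h1, h2, h3]
  calc (∏ j : Fin n, if (j : ℕ) < m + 1 then f j else 1)
      = ∏ j : Fin n, ((if (j : ℕ) < m then f j else 1) * (if j = ⟨m, hm⟩ then f j else 1)) :=
        Finset.prod_congr rfl fun j _ => h j
    _ = _ := by rw [Finset.prod_mul_distrib]; simp

lemma PiB_succ {n : ℕ} (β : BehavStrategy A B S B n)
    (ha : Fin n → A) (hb : Fin n → B) (s : S) (m : ℕ) (hm : m < n) :
    PiB β ha hb s (m + 1) = PiB β ha hb s m * β.prob ⟨m, hm⟩ ha hb s (hb ⟨m, hm⟩) :=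
  prod_if_succ (fun j => β.prob j ha hb s (hb j)) m hm

/-- The Bayesian blend of a fully-informed Bob strategy into a `TB`-informed one. -/
noncomputable def blend [Nonempty B] (p : S → ℝ) (hp : ∀ s, 0 ≤ p s) (TB : S → SB) {n : ℕ}
    (β : BehavStrategy A B S B n) : BehavStrategy A B SB B n where
  prob i ha hb t x :=
    if 0 < DB p TB β ha hb t (i : ℕ) then
      (∑ s : S, if TB s = t then p s * PiB β ha hb s (i : ℕ) * β.prob i ha hb s x else 0)
        / DB p TB β ha hb t (i : ℕ)
    else (Fintype.card B : ℝ)⁻¹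
  nonneg := by
    intro i ha hb t x
    split
    · refine div_nonneg (Finset.sum_nonneg fun s _ => ?_) (DB_nonneg p hp TB β ha hb t i)
      split
      · exact mul_nonneg (mul_nonneg (hp s) (PiB_nonneg β ha hb s i))
          (β.nonneg i ha hb s x)
      · exact le_rfl
    · positivity
  sum_one := by
    intro i ha hb t
    by_cases hD : 0 < DB p TB β ha hb t (i : ℕ)
    · simp only [if_pos hD]
      rw [← Finset.sum_div]
      rw [show (∑ x : B, ∑ s : S,
          if TB s = t then p s * PiB β ha hb s (i : ℕ) * β.prob i ha hb s x else 0)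
            = DB p TB β ha hb t (i : ℕ) from ?_, div_self hD.ne']
      rw [Finset.sum_comm]
      refine Finset.sum_congr rfl fun s _ => ?_
      by_cases h : TB s = t
      · simp only [h, if_true, ← Finset.mul_sum, β.sum_one i ha hb s, mul_one]
      · simp [h]
    · simp only [if_neg hD]
      rw [Finset.sum_const, Finset.card_univ, nsmul_eq_mul,
        mul_inv_cancel₀ (Nat.cast_ne_zero.mpr Fintype.card_ne_zero)]
  causal := by
    intro i ha ha' hb hb' t hA hB
    have h1 : ∀ (j : Fin n), (j : ℕ) ≤ (i : ℕ) → ∀ s, β.prob j ha hb s = β.prob j ha' hb' s :=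
      fun j hj s => β.causal j ha ha' hb hb' s
        (fun k hk => hA k (lt_of_lt_of_le hk hj)) (fun k hk => hB k (lt_of_lt_of_le hk hj))
    have hPi : ∀ s, PiB β ha hb s (i : ℕ) = PiB β ha' hb' s (i : ℕ) := by
      intro s
      refine Finset.prod_congr rfl fun j _ => ?_
      by_cases hj : (j : ℕ) < (i : ℕ)
      · rw [if_pos hj, if_pos hj, h1 j hj.le s, hB j hj]
      · rw [if_neg hj, if_neg hj]
    have hD : DB p TB β ha hb t (i : ℕ) = DB p TB β ha' hb' t (i : ℕ) :=
      Finset.sum_congr rfl fun s _ => by rw [hPi s]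
    funext x
    rw [hD, Finset.sum_congr rfl fun s _ => by rw [hPi s, h1 i le_rfl s]]

lemma blend_prod_ge [Nonempty B] (p : S → ℝ) (hp : ∀ s, 0 ≤ p s) (TB : S → SB) {n : ℕ}
    (β : BehavStrategy A B S B n) (a : Fin n → A) (b : Fin n → B) (t : SB) :
    ∀ m : ℕ, m ≤ n →
      DB p TB β a b t m ≤ DB p TB β a b t 0 *
        ∏ j : Fin n, if (j : ℕ) < m then (blend p hp TB β).prob j a b t (b j) else 1 := by
  intro m
  induction m with
  | zero =>
    intro _
    simp
  | succ m ih =>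
    intro hm1
    have hm : m < n := hm1
    have ihm := ih (le_of_lt hm1)
    rw [prod_if_succ (fun j => (blend p hp TB β).prob j a b t (b j)) m hm]
    have hDsucc : (∑ s : S, if TB s = t then
        p s * PiB β a b s m * β.prob ⟨m, hm⟩ a b s (b ⟨m, hm⟩) else 0)
          = DB p TB β a b t (m + 1) := by
      refine Finset.sum_congr rfl fun s _ => ?_
      by_cases h : TB s = t
      · simp only [h, if_true, PiB_succ β a b s m hm, mul_assoc]
      · simp [h]
    by_cases hD : 0 < DB p TB β a b t m
    · have hblend : (blend p hp TB β).prob ⟨m, hm⟩ a b t (b ⟨m, hm⟩)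
          = DB p TB β a b t (m + 1) / DB p TB β a b t m := by
        show (if 0 < DB p TB β a b t m then _ / DB p TB β a b t m else _) = _
        rw [if_pos hD, hDsucc]
      rw [hblend, ← mul_assoc]
      have hc : 0 ≤ DB p TB β a b t (m + 1) / DB p TB β a b t m :=
        div_nonneg (DB_nonneg p hp TB β a b t (m + 1)) hD.le
      calc DB p TB β a b t (m + 1)
          = DB p TB β a b t m * (DB p TB β a b t (m + 1) / DB p TB β a b t m) := by
            rw [mul_div_cancel₀ _ hD.ne']
        _ ≤ (DB p TB β a b t 0 *
              ∏ j : Fin n, if (j : ℕ) < m then (blend p hp TB β).prob j a b t (b j) else 1)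
              * (DB p TB β a b t (m + 1) / DB p TB β a b t m) :=
            mul_le_mul_of_nonneg_right ihm hc
    · have hD0 : DB p TB β a b t m = 0 :=
        le_antisymm (not_lt.mp hD) (DB_nonneg p hp TB β a b t m)
      have hterm : ∀ s ∈ (Finset.univ : Finset S),
          (if TB s = t then p s * PiB β a b s m else 0) = 0 :=
        (Finset.sum_eq_zero_iff_of_nonneg (fun s _ => by
          split
          · exact mul_nonneg (hp s) (PiB_nonneg β a b s m)
          · exact le_rfl)).mp hD0
      have hD1 : DB p TB β a b t (m + 1) = 0 := by
        refine Finset.sum_eq_zero fun s _ => ?_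
        by_cases h : TB s = t
        · have h0 := hterm s (Finset.mem_univ s)
          rw [if_pos h] at h0
          rw [if_pos h, PiB_succ β a b s m hm, ← mul_assoc, h0, zero_mul]
        · rw [if_neg h]
      rw [hD1]
      refine mul_nonneg (DB_nonneg p hp TB β a b t 0)
        (mul_nonneg (Finset.prod_nonneg fun j _ => ?_)
          ((blend p hp TB β).nonneg _ a b t (b _)))
      split
      · exact (blend p hp TB β).nonneg _ a b t (b _)
      · exact zero_le_one

/-- A `TB`-informed Bob strategy viewed as a fully informed one. -/
def liftB (TB : S → SB) {n : ℕ} (β : BehavStrategy A B SB B n) : BehavStrategy A B S B n where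
  prob i ha hb s x := β.prob i ha hb (TB s) x
  nonneg i ha hb s x := β.nonneg i ha hb (TB s) x
  sum_one i ha hb s := β.sum_one i ha hb (TB s)
  causal i ha ha' hb hb' s h1 h2 := by
    funext x
    exact congrFun (β.causal i ha ha' hb hb' (TB s) h1 h2) x

lemma probBelow_liftB {SA : Type*} (g : S → A → B → ℝ) (p : S → ℝ) (TA : S → SA) (TB : S → SB)
    {n : ℕ} (α : BehavStrategy A B SA A n) (β : BehavStrategy A B SB B n) (v : ℝ) :
    probBelow g p TA (id : S → S) α (liftB TB β) v = probBelow g p TA TB α β v := rfl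

lemma inducedP_nonneg {SA SB' : Type*} (p : S → ℝ) (hp : ∀ s, 0 ≤ p s)
    (TA : S → SA) (TB' : S → SB') {n : ℕ}
    (α : BehavStrategy A B SA A n) (β : BehavStrategy A B SB' B n)
    (s : S) (a : Fin n → A) (b : Fin n → B) :
    0 ≤ inducedP p TA TB' α β s a b := by
  refine mul_nonneg (hp s) (Finset.prod_nonneg fun i _ => ?_)
  exact mul_nonneg (α.nonneg i a b (TA s) (a i)) (β.nonneg i a b (TB' s) (b i))

lemma inducedP_le_blend [Nonempty B] {SA : Type*} (p : S → ℝ) (hp : ∀ s, 0 ≤ p s)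
    (hp1 : ∑ s, p s = 1) (TA : S → SA) (TB : S → SB) {n : ℕ}
    (α : BehavStrategy A B SA A n) (β : BehavStrategy A B S B n)
    (s : S) (a : Fin n → A) (b : Fin n → B) :
    p s * inducedP p TA (id : S → S) α β s a b
      ≤ inducedP p TA TB α (blend p hp TB β) s a b := by
  have key : p s * ∏ i : Fin n, β.prob i a b s (b i)
      ≤ ∏ i : Fin n, (blend p hp TB β).prob i a b (TB s) (b i) := by
    have h1 : p s * ∏ i : Fin n, β.prob i a b s (b i) ≤ DB p TB β a b (TB s) n := by
      have hPn : PiB β a b s n = ∏ i : Fin n, β.prob i a b s (b i) :=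
        Finset.prod_congr rfl fun j _ => if_pos j.isLt
      have := Finset.single_le_sum (f := fun s' =>
          if TB s' = TB s then p s' * PiB β a b s' n else 0)
        (fun s' _ => by
          split
          · exact mul_nonneg (hp s') (PiB_nonneg β a b s' n)
          · exact le_rfl)
        (Finset.mem_univ s)
      rw [if_pos rfl, hPn] at this
      exact this
    have h2 := blend_prod_ge p hp TB β a b (TB s) n le_rfl
    have h3 : (∏ j : Fin n, if (j : ℕ) < n then (blend p hp TB β).prob j a b (TB s) (b j) else 1)
        = ∏ i : Fin n, (blend p hp TB β).prob i a b (TB s) (b i) :=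
      Finset.prod_congr rfl fun j _ => if_pos j.isLt
    have h4 : DB p TB β a b (TB s) 0 ≤ 1 := by
      rw [← hp1]
      refine Finset.sum_le_sum fun s' _ => ?_
      split
      · have : PiB β a b s' 0 = 1 := Finset.prod_congr rfl (fun j _ => if_neg (by omega))
          |>.trans Finset.prod_const_one
        rw [this, mul_one]
      · exact hp s'
    have h5 : 0 ≤ ∏ i : Fin n, (blend p hp TB β).prob i a b (TB s) (b i) :=
      Finset.prod_nonneg fun i _ => (blend p hp TB β).nonneg i a b (TB s) (b i)
    calc p s * ∏ i : Fin n, β.prob i a b s (b i) ≤ DB p TB β a b (TB s) n := h1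
      _ ≤ DB p TB β a b (TB s) 0 *
          ∏ j : Fin n, if (j : ℕ) < n then (blend p hp TB β).prob j a b (TB s) (b j) else 1 := h2
      _ = DB p TB β a b (TB s) 0 *
          ∏ i : Fin n, (blend p hp TB β).prob i a b (TB s) (b i) := by rw [h3]
      _ ≤ 1 * ∏ i : Fin n, (blend p hp TB β).prob i a b (TB s) (b i) :=
          mul_le_mul_of_nonneg_right h4 h5
      _ = _ := one_mul _
  unfold inducedP
  simp only [id_eq]
  rw [Finset.prod_mul_distrib, Finset.prod_mul_distrib]
  have hα : 0 ≤ p s * ∏ i : Fin n, α.prob i a b (TA s) (a i) :=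
    mul_nonneg (hp s) (Finset.prod_nonneg fun i _ => α.nonneg i a b (TA s) (a i))
  calc p s * (p s * ((∏ i : Fin n, α.prob i a b (TA s) (a i)) *
        ∏ i : Fin n, β.prob i a b s (b i)))
      = (p s * ∏ i : Fin n, α.prob i a b (TA s) (a i)) *
          (p s * ∏ i : Fin n, β.prob i a b s (b i)) := by ring
    _ ≤ (p s * ∏ i : Fin n, α.prob i a b (TA s) (a i)) *
          ∏ i : Fin n, (blend p hp TB β).prob i a b (TB s) (b i) :=
        mul_le_mul_of_nonneg_left key hα
    _ = _ := by ring

lemma probBelow_le_blend [Nonempty B] {SA : Type*} (g : S → A → B → ℝ) (p : S → ℝ)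
    (hp : ∀ s, 0 ≤ p s) (hp1 : ∑ s, p s = 1) (TA : S → SA) (TB : S → SB) {n : ℕ}
    (α : BehavStrategy A B SA A n) (β : BehavStrategy A B S B n) (v : ℝ)
    (c : ℝ) (hc : 0 ≤ c) (hcp : ∀ s, c ≤ p s) :
    c * probBelow g p TA (id : S → S) α β v
      ≤ probBelow g p TA TB α (blend p hp TB β) v := by
  unfold probBelow
  rw [Finset.mul_sum]
  refine Finset.sum_le_sum fun s _ => ?_
  rw [Finset.mul_sum]
  refine Finset.sum_le_sum fun a _ => ?_
  rw [Finset.mul_sum]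
  refine Finset.sum_le_sum fun b _ => ?_
  split
  · calc c * inducedP p TA (id : S → S) α β s a b
        ≤ p s * inducedP p TA (id : S → S) α β s a b :=
          mul_le_mul_of_nonneg_right (hcp s) (inducedP_nonneg p hp TA _ α β s a b)
      _ ≤ _ := inducedP_le_blend p hp hp1 TA TB α β s a b
  · rw [mul_zero]

lemma stronglyGuarantees_id_iff {SA : Type*} [Nonempty S] [Nonempty B]
    (g : S → A → B → ℝ) (p : S → ℝ) (hp : ∀ s, 0 < p s) (hp1 : ∑ s, p s = 1)
    (TA : S → SA) (TB : S → SB) (v : ℝ) :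
    StronglyGuarantees g p TA TB v ↔ StronglyGuarantees g p TA (id : S → S) v := by
  obtain ⟨s0, -, hs0⟩ := Finset.exists_min_image (Finset.univ : Finset S) p
    ⟨Classical.arbitrary S, Finset.mem_univ _⟩
  have hc0 : 0 < p s0 := hp s0
  have hcp : ∀ s, p s0 ≤ p s := fun s => hs0 s (Finset.mem_univ s)
  have hp' : ∀ s, 0 ≤ p s := fun s => (hp s).le
  constructor
  · intro h ε hε
    obtain ⟨N, hN⟩ := h (ε * p s0) (mul_pos hε hc0)
    refine ⟨N, fun n hn => ?_⟩
    obtain ⟨α, hα⟩ := hN n hn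
    refine ⟨α, fun β => ?_⟩
    have h1 := probBelow_le_blend g p hp' hp1 TA TB α β v (p s0) hc0.le hcp
    have h2 := hα (blend p hp' TB β)
    nlinarith [lt_of_le_of_lt h1 h2]
  · intro h ε hε
    obtain ⟨N, hN⟩ := h ε hε
    refine ⟨N, fun n hn => ?_⟩
    obtain ⟨α, hα⟩ := hN n hn
    exact ⟨α, fun β => by
      rw [← probBelow_liftB g p TA TB α β v]; exact hα (liftB TB β)⟩

lemma weaklyGuarantees_id_iff {SA : Type*} [Nonempty S] [Nonempty B]
    (g : S → A → B → ℝ) (p : S → ℝ) (hp : ∀ s, 0 < p s) (hp1 : ∑ s, p s = 1)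
    (TA : S → SA) (TB : S → SB) (v : ℝ) :
    WeaklyGuarantees g p TA TB v ↔ WeaklyGuarantees g p TA (id : S → S) v := by
  obtain ⟨s0, -, hs0⟩ := Finset.exists_min_image (Finset.univ : Finset S) p
    ⟨Classical.arbitrary S, Finset.mem_univ _⟩
  have hc0 : 0 < p s0 := hp s0
  have hcp : ∀ s, p s0 ≤ p s := fun s => hs0 s (Finset.mem_univ s)
  have hp' : ∀ s, 0 ≤ p s := fun s => (hp s).le
  constructor
  · intro h ε hε
    obtain ⟨N, hN⟩ := h (ε * p s0) (mul_pos hε hc0)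
    refine ⟨N, fun n hn β => ?_⟩
    obtain ⟨α, hα⟩ := hN n hn (blend p hp' TB β)
    refine ⟨α, ?_⟩
    have h1 := probBelow_le_blend g p hp' hp1 TA TB α β v (p s0) hc0.le hcp
    nlinarith [lt_of_le_of_lt h1 hα]
  · intro h ε hε
    obtain ⟨N, hN⟩ := h ε hε
    refine ⟨N, fun n hn β => ?_⟩
    obtain ⟨α, hα⟩ := hN n hn (liftB TB β)
    exact ⟨α, by rw [← probBelow_liftB g p TA TB α β v]; exact hα⟩


/-- Bob's side information is irrelevant for the values Alice can guarantee
with high probability: replacing `𝒯_B` by the full-information map `𝟙` changes neither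
`v_sup^w` nor `v_sup^s`. -/
theorem stmt4 {S SA SB A B : Type*} [Fintype S] [Fintype SA] [Fintype SB] [Fintype A] [Fintype B]
    [Nonempty S] [Nonempty SA] [Nonempty SB] [Nonempty A] [Nonempty B]
    (g : S → A → B → ℝ) (p : S → ℝ) (hp : ∀ s, 0 < p s) (hp1 : ∑ s, p s = 1)
    (TA : S → SA) (TB : S → SB) :
    (vsupW g p TA TB = vsupW g p TA (id : S → S)) ∧
    (vsupS g p TA TB = vsupS g p TA (id : S → S)) := by
  constructor
  · unfold vsupW
    congr 1
    ext v
    simp only [Set.mem_setOf_eq]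
    exact weaklyGuarantees_id_iff g p hp hp1 TA TB v
  · unfold vsupS
    congr 1
    ext v
    simp only [Set.mem_setOf_eq]
    exact stronglyGuarantees_id_iff g p hp hp1 TA TB v
end

section
/- v_sup^s(p, ∅, 𝟙) ≥ inf { u(q) : q a probability distribution on 𝒮 }; i.e., when Alice has no side information and Bob knows the state exactly, Alice can strongly guarantee any value below the minimum over priors q of the value u(q) of the one-stage averaged game. -/
open Finset

variable {S SA SB A B : Type*} [Fintype S] [Fintype A] [Fintype B]

set_option linter.unusedSectionVars false
set_option maxHeartbeats 1000000

section Chunk1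
variable {S A B : Type*} [Fintype S] [Fintype A] [Fintype B]
variable [Nonempty S] [Nonempty A] [Nonempty B]

lemma ciInf_eq_inf' (f : B → ℝ) : (⨅ b, f b) = Finset.univ.inf' univ_nonempty f := by
  apply le_antisymm
  · obtain ⟨b0, -, hb0⟩ := Finset.exists_mem_eq_inf' univ_nonempty f
    rw [hb0]
    exact ciInf_le (Set.Finite.bddBelow (Set.finite_range f)) b0
  · exact le_ciInf fun b => Finset.inf'_le _ (mem_univ b)

noncomputable def payq (g : S → A → B → ℝ) (q : S → ℝ) (x : A → ℝ) (b : B) : ℝ :=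
  ∑ s : S, ∑ a : A, q s * x a * g s a b

lemma payq_le {g : S → A → B → ℝ} {G : ℝ} (hG : ∀ s a b, |g s a b| ≤ G)
    {q : S → ℝ} (hq0 : ∀ s, 0 ≤ q s) (hq1 : ∑ s, q s = 1)
    {x : A → ℝ} (hx0 : ∀ a, 0 ≤ x a) (hx1 : ∑ a, x a = 1) (b : B) :
    |payq g q x b| ≤ G := by
  have key : |payq g q x b| ≤ ∑ s : S, ∑ a : A, q s * x a * G := by
    refine (Finset.abs_sum_le_sum_abs _ _).trans ?_
    refine Finset.sum_le_sum fun s _ => ?_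
    refine (Finset.abs_sum_le_sum_abs _ _).trans ?_
    refine Finset.sum_le_sum fun a _ => ?_
    rw [abs_mul, abs_mul, abs_of_nonneg (hq0 s), abs_of_nonneg (hx0 a)]
    exact mul_le_mul_of_nonneg_left (hG s a b) (mul_nonneg (hq0 s) (hx0 a))
  have : ∑ s : S, ∑ a : A, q s * x a * G = G := by
    have : ∀ s : S, ∑ a : A, q s * x a * G = q s * G := by
      intro s
      rw [← Finset.sum_mul, ← Finset.mul_sum, hx1, mul_one]
    simp only [this, ← Finset.sum_mul, hq1, one_mul]
  linarith [key, this.le, this.ge]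

noncomputable def unif (A : Type*) [Fintype A] : A → ℝ := fun _ => (Fintype.card A : ℝ)⁻¹

lemma unif_nonneg : ∀ a : A, 0 ≤ unif A a := fun _ => by
  unfold unif; positivity

lemma unif_sum_one : ∑ a : A, unif A a = 1 := by
  unfold unif
  rw [Finset.sum_const, Finset.card_univ, nsmul_eq_mul, mul_inv_cancel₀]
  exact_mod_cast Fintype.card_ne_zero

instance : Nonempty {x : A → ℝ // (∀ a, 0 ≤ x a) ∧ ∑ a, x a = 1} :=
  ⟨⟨unif A, unif_nonneg, unif_sum_one⟩⟩

lemma uVal_bddAbove {g : S → A → B → ℝ} {G : ℝ} (hG : ∀ s a b, |g s a b| ≤ G)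
    {q : S → ℝ} (hq0 : ∀ s, 0 ≤ q s) (hq1 : ∑ s, q s = 1) :
    ∀ x : {x : A → ℝ // (∀ a, 0 ≤ x a) ∧ ∑ a, x a = 1},
      (⨅ b : B, ∑ s : S, ∑ a : A, q s * x.1 a * g s a b) ≤ G := by
  intro x
  obtain ⟨b0⟩ := (inferInstance : Nonempty B)
  refine le_trans (ciInf_le (Set.Finite.bddBelow (Set.finite_range _)) b0) ?_
  exact (abs_le.mp (payq_le hG hq0 hq1 x.2.1 x.2.2 b0)).2

lemma uVal_le {g : S → A → B → ℝ} {G : ℝ} (hG : ∀ s a b, |g s a b| ≤ G)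
    {q : S → ℝ} (hq0 : ∀ s, 0 ≤ q s) (hq1 : ∑ s, q s = 1) :
    uVal g q ≤ G :=
  ciSup_le (uVal_bddAbove hG hq0 hq1)

lemma uVal_ge {g : S → A → B → ℝ} {G : ℝ} (hG : ∀ s a b, |g s a b| ≤ G)
    {q : S → ℝ} (hq0 : ∀ s, 0 ≤ q s) (hq1 : ∑ s, q s = 1) :
    -G ≤ uVal g q := by
  have h1 : -G ≤ ⨅ b : B, ∑ s : S, ∑ a : A, q s * (unif A) a * g s a b := by
    refine le_ciInf fun b => ?_
    exact (abs_le.mp (payq_le hG hq0 hq1 unif_nonneg unif_sum_one b)).1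
  refine h1.trans ?_
  refine le_ciSup_of_le ⟨G, ?_⟩ ⟨unif A, unif_nonneg, unif_sum_one⟩ le_rfl
  rintro y ⟨x, rfl⟩
  exact uVal_bddAbove hG hq0 hq1 x

/-- Existence of an optimal mixed action for Alice in the averaged one-stage game. -/
lemma optExists (g : S → A → B → ℝ) (q : S → ℝ) (hq0 : ∀ s, 0 ≤ q s) (hq1 : ∑ s, q s = 1) :
    ∃ x : A → ℝ, (∀ a, 0 ≤ x a) ∧ (∑ a, x a = 1) ∧
      ∀ b, uVal g q ≤ ∑ s : S, ∑ a : A, q s * x a * g s a b := by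
  set F : (A → ℝ) → ℝ := fun x => Finset.univ.inf' univ_nonempty (payq g q x) with hF
  have hcont : Continuous F := by
    apply Continuous.finset_inf'_apply univ_nonempty
    intro b _
    unfold payq
    refine continuous_finset_sum _ fun s _ => continuous_finset_sum _ fun a _ => ?_
    exact ((continuous_const.mul (continuous_apply a)).mul continuous_const)
  obtain ⟨x, hxmem, hxmax⟩ := (isCompact_stdSimplex ℝ A).exists_isMaxOn
    ⟨unif A, ⟨unif_nonneg, unif_sum_one⟩⟩ hcont.continuousOn
  obtain ⟨hx0, hx1⟩ := hxmem
  refine ⟨x, hx0, hx1, fun b => ?_⟩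
  have h1 : uVal g q ≤ F x := by
    refine ciSup_le fun y => ?_
    have : (⨅ b : B, ∑ s : S, ∑ a : A, q s * y.1 a * g s a b) = F y.1 := by
      rw [hF]; exact ciInf_eq_inf' _
    rw [this]
    exact hxmax y.2
  exact h1.trans (Finset.inf'_le _ (mem_univ b))

end Chunk1


section Chunk2
variable {S A B : Type*} [Fintype S] [Fintype A] [Fintype B]
variable {n : ℕ}

/-- `F` depends only on coordinates `< m`. -/
def DepLt (n : ℕ) (m : ℕ) (F : (Fin n → A) → (Fin n → B) → ℝ) : Prop :=
  ∀ a a' b b', (∀ j : Fin n, (j : ℕ) < m → a j = a' j) →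
    (∀ j : Fin n, (j : ℕ) < m → b j = b' j) → F a b = F a' b'

lemma DepLt.mono {m m' : ℕ} (h : m ≤ m') {F : (Fin n → A) → (Fin n → B) → ℝ}
    (hF : DepLt n m F) : DepLt n m' F :=
  fun a a' b b' ha hb => hF a a' b b' (fun j hj => ha j (lt_of_lt_of_le hj h))
    (fun j hj => hb j (lt_of_lt_of_le hj h))

/-- Stage factor. -/
noncomputable def stageC (α : BehavStrategy A B Unit A n) (β : BehavStrategy A B S B n)
    (s : S) (k : Fin n) (a : Fin n → A) (b : Fin n → B) : ℝ :=
  α.prob k a b () (a k) * β.prob k a b s (b k)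

/-- Partial product of stage factors over stages `< m`. -/
noncomputable def W (α : BehavStrategy A B Unit A n) (β : BehavStrategy A B S B n)
    (s : S) (m : ℕ) (a : Fin n → A) (b : Fin n → B) : ℝ :=
  ∏ i : Fin n, if (i : ℕ) < m then stageC α β s i a b else 1

variable {α : BehavStrategy A B Unit A n} {β : BehavStrategy A B S B n} {s : S}

lemma W_nonneg (m : ℕ) (a : Fin n → A) (b : Fin n → B) : 0 ≤ W α β s m a b := by
  refine Finset.prod_nonneg fun i _ => ?_
  split
  · exact mul_nonneg (α.nonneg _ _ _ _ _) (β.nonneg _ _ _ _ _)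
  · exact zero_le_one

lemma W_depLt (m : ℕ) : DepLt n m (W α β s m) := by
  intro a a' b b' ha hb
  refine Finset.prod_congr rfl fun i _ => ?_
  by_cases hi : (i : ℕ) < m
  · simp only [hi, if_true]
    unfold stageC
    have hα : α.prob i a b () = α.prob i a' b' () :=
      α.causal i a a' b b' () (fun j hj => ha j (hj.trans hi)) (fun j hj => hb j (hj.trans hi))
    have hβ : β.prob i a b s = β.prob i a' b' s :=
      β.causal i a a' b b' s (fun j hj => ha j (hj.trans hi)) (fun j hj => hb j (hj.trans hi))
    rw [hα, hβ, ha i hi, hb i hi]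
  · simp only [hi, if_false]

lemma W_succ {m : ℕ} (hm : m < n) (a : Fin n → A) (b : Fin n → B) :
    W α β s (m + 1) a b = W α β s m a b * stageC α β s ⟨m, hm⟩ a b := by
  unfold W
  have h1 : ∀ i : Fin n, (if (i : ℕ) < m + 1 then stageC α β s i a b else 1)
      = (if (i : ℕ) < m then stageC α β s i a b else 1) *
        (if i = ⟨m, hm⟩ then stageC α β s i a b else 1) := by
    intro i
    rcases lt_trichotomy (i : ℕ) m with h | h | h
    · have : i ≠ ⟨m, hm⟩ := fun he => Nat.lt_irrefl m (by simpa [he] using h)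
      simp [h, h.trans (Nat.lt_succ_self m), this]
    · have : i = ⟨m, hm⟩ := Fin.ext h
      simp [this, Nat.lt_irrefl, Nat.lt_succ_self]
    · have h2 : ¬ (i : ℕ) < m + 1 := by omega
      have h3 : ¬ (i : ℕ) < m := by omega
      have : i ≠ ⟨m, hm⟩ := fun he => Nat.lt_irrefl m (by simpa [he] using h)
      simp [h2, h3, this]
  rw [Finset.prod_congr rfl fun i _ => h1 i, Finset.prod_mul_distrib]
  congr 1
  simpa using Finset.prod_ite_eq' Finset.univ (⟨m, hm⟩ : Fin n) (fun i => stageC α β s i a b)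

/-- Doubling a coordinate: self-inverse shuffle. -/
def updEquiv (n : ℕ) (A B : Type*) (k : Fin n) :
    (((Fin n → A) × (Fin n → B)) × (A × B)) ≃ (((Fin n → A) × (Fin n → B)) × (A × B)) where
  toFun p := ((Function.update p.1.1 k p.2.1, Function.update p.1.2 k p.2.2),
    (p.1.1 k, p.1.2 k))
  invFun p := ((Function.update p.1.1 k p.2.1, Function.update p.1.2 k p.2.2),
    (p.1.1 k, p.1.2 k))
  left_inv p := by
    obtain ⟨⟨a, b⟩, ⟨x, y⟩⟩ := p
    simp [Function.update_idem, Function.update_eq_self]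
  right_inv p := by
    obtain ⟨⟨a, b⟩, ⟨x, y⟩⟩ := p
    simp [Function.update_idem, Function.update_eq_self]

lemma sum_update2 (k : Fin n) (h : (Fin n → A) → (Fin n → B) → ℝ) :
    ∑ a : Fin n → A, ∑ b : Fin n → B, ∑ x : A, ∑ y : B,
      h (Function.update a k x) (Function.update b k y)
      = (Fintype.card A * Fintype.card B : ℝ) * ∑ a : Fin n → A, ∑ b : Fin n → B, h a b := by
  have key : ∑ p : ((Fin n → A) × (Fin n → B)) × (A × B),
      h (Function.update p.1.1 k p.2.1) (Function.update p.1.2 k p.2.2)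
      = ∑ p : ((Fin n → A) × (Fin n → B)) × (A × B), h p.1.1 p.1.2 := by
    exact (updEquiv n A B k).sum_comp (fun p => h p.1.1 p.1.2)
  have lhs : ∑ a : Fin n → A, ∑ b : Fin n → B, ∑ x : A, ∑ y : B,
      h (Function.update a k x) (Function.update b k y)
      = ∑ p : ((Fin n → A) × (Fin n → B)) × (A × B),
        h (Function.update p.1.1 k p.2.1) (Function.update p.1.2 k p.2.2) := by
    simp only [Fintype.sum_prod_type]
  have rhs : ∑ p : ((Fin n → A) × (Fin n → B)) × (A × B), h p.1.1 p.1.2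
      = (Fintype.card A * Fintype.card B : ℝ) * ∑ a : Fin n → A, ∑ b : Fin n → B, h a b := by
    simp only [Fintype.sum_prod_type, Finset.sum_const, Finset.card_univ, nsmul_eq_mul,
      Fintype.card_prod]
    rw [Finset.mul_sum]
    refine Finset.sum_congr rfl fun a _ => ?_
    rw [Finset.mul_sum]
    refine Finset.sum_congr rfl fun b _ => ?_
    push_cast
    ring
  rw [lhs, key, rhs]


section Step
variable [Nonempty A] [Nonempty B]

lemma cardAB_pos : (0:ℝ) < (Fintype.card A * Fintype.card B : ℝ) := by
  have hA := Fintype.card_pos (α := A)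
  have hB := Fintype.card_pos (α := B)
  positivity

lemma step {m : ℕ} (hm : m < n) (F : (Fin n → A) → (Fin n → B) → ℝ) :
    ∑ a : Fin n → A, ∑ b : Fin n → B, W α β s (m+1) a b * F a b
      = (Fintype.card A * Fintype.card B : ℝ)⁻¹ *
        ∑ a : Fin n → A, ∑ b : Fin n → B, W α β s m a b *
          (∑ x : A, ∑ y : B, α.prob ⟨m,hm⟩ a b () x * β.prob ⟨m,hm⟩ a b s y *
            F (Function.update a ⟨m,hm⟩ x) (Function.update b ⟨m,hm⟩ y)) := by
  set k : Fin n := ⟨m, hm⟩ with hk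
  have hkv : (k : ℕ) = m := rfl
  set h : (Fin n → A) → (Fin n → B) → ℝ := fun a b => W α β s (m+1) a b * F a b with hh
  have hne : ∀ j : Fin n, (j:ℕ) < m → j ≠ k := by
    intro j hj he
    rw [he, hk] at hj
    exact Nat.lt_irrefl m hj
  have key : ∀ (a : Fin n → A) (b : Fin n → B) (x : A) (y : B),
      h (Function.update a k x) (Function.update b k y)
      = W α β s m a b * (α.prob k a b () x * β.prob k a b s y *
          F (Function.update a k x) (Function.update b k y)) := by
    intro a b x y
    have hagA : ∀ j : Fin n, (j:ℕ) < m → Function.update a k x j = a j := fun j hj =>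
      Function.update_of_ne (hne j hj) _ _
    have hagB : ∀ j : Fin n, (j:ℕ) < m → Function.update b k y j = b j := fun j hj =>
      Function.update_of_ne (hne j hj) _ _
    have hW : W α β s m (Function.update a k x) (Function.update b k y) = W α β s m a b :=
      W_depLt m _ _ _ _ hagA hagB
    have hα : α.prob k (Function.update a k x) (Function.update b k y) ()
        = α.prob k a b () := α.causal k _ _ _ _ () (fun j hj => hagA j hj) (fun j hj => hagB j hj)
    have hβ : β.prob k (Function.update a k x) (Function.update b k y) s
        = β.prob k a b s := β.causal k _ _ _ _ s (fun j hj => hagA j hj) (fun j hj => hagB j hj)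
    show W α β s (m+1) _ _ * F _ _ = _
    rw [W_succ hm, hW]
    unfold stageC
    rw [hα, hβ, Function.update_self, Function.update_self]
    ring
  have hdup := sum_update2 (A := A) (B := B) k h
  have hz : (Fintype.card A * Fintype.card B : ℝ) ≠ 0 := ne_of_gt cardAB_pos
  have hmain : ∑ a : Fin n → A, ∑ b : Fin n → B, ∑ x : A, ∑ y : B,
      h (Function.update a k x) (Function.update b k y)
      = ∑ a : Fin n → A, ∑ b : Fin n → B, W α β s m a b *
          (∑ x : A, ∑ y : B, α.prob k a b () x * β.prob k a b s y *
            F (Function.update a k x) (Function.update b k y)) := by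
    refine Finset.sum_congr rfl fun a _ => Finset.sum_congr rfl fun b _ => ?_
    rw [Finset.mul_sum]
    refine Finset.sum_congr rfl fun x _ => ?_
    rw [Finset.mul_sum]
    refine Finset.sum_congr rfl fun y _ => ?_
    exact key a b x y
  have : ∑ a : Fin n → A, ∑ b : Fin n → B, h a b
      = (Fintype.card A * Fintype.card B : ℝ)⁻¹ *
        (∑ a : Fin n → A, ∑ b : Fin n → B, ∑ x : A, ∑ y : B,
          h (Function.update a k x) (Function.update b k y)) := by
    rw [hdup, inv_mul_cancel_left₀ hz]
  rw [show (∑ a : Fin n → A, ∑ b : Fin n → B, W α β s (m+1) a b * F a b)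
      = ∑ a : Fin n → A, ∑ b : Fin n → B, h a b from rfl, this, hmain]

lemma step_const {m : ℕ} (hm : m < n) (F : (Fin n → A) → (Fin n → B) → ℝ)
    (hF : DepLt n m F) :
    ∑ a : Fin n → A, ∑ b : Fin n → B, W α β s (m+1) a b * F a b
      = (Fintype.card A * Fintype.card B : ℝ)⁻¹ *
        ∑ a : Fin n → A, ∑ b : Fin n → B, W α β s m a b * F a b := by
  rw [step hm F]
  congr 1
  refine Finset.sum_congr rfl fun a _ => Finset.sum_congr rfl fun b _ => ?_
  congr 1
  set k : Fin n := ⟨m, hm⟩ with hk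
  have hne : ∀ j : Fin n, (j:ℕ) < m → j ≠ k := by
    intro j hj he
    rw [he, hk] at hj
    exact Nat.lt_irrefl m hj
  have hupd : ∀ (x : A) (y : B),
      F (Function.update a k x) (Function.update b k y) = F a b := by
    intro x y
    exact hF _ _ _ _ (fun j hj => Function.update_of_ne (hne j hj) _ _)
      (fun j hj => Function.update_of_ne (hne j hj) _ _)
  have : ∀ x : A, ∑ y : B, α.prob k a b () x * β.prob k a b s y * F (Function.update a k x) (Function.update b k y)
      = α.prob k a b () x * F a b := by
    intro x
    have : ∀ y : B, α.prob k a b () x * β.prob k a b s y * F (Function.update a k x) (Function.update b k y)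
        = (α.prob k a b () x * F a b) * β.prob k a b s y := by
      intro y; rw [hupd x y]; ring
    rw [Finset.sum_congr rfl fun y _ => this y, ← Finset.mul_sum, β.sum_one, mul_one]
  rw [Finset.sum_congr rfl fun x _ => this x, ← Finset.sum_mul, α.sum_one, one_mul]

lemma iterate {k m : ℕ} (hkm : k ≤ m) (hmn : m ≤ n) (F : (Fin n → A) → (Fin n → B) → ℝ)
    (hF : DepLt n k F) :
    ∑ a : Fin n → A, ∑ b : Fin n → B, W α β s m a b * F a b
      = ((Fintype.card A * Fintype.card B : ℝ) ^ (m - k))⁻¹ *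
        ∑ a : Fin n → A, ∑ b : Fin n → B, W α β s k a b * F a b := by
  induction m with
  | zero =>
    have : k = 0 := Nat.le_zero.mp hkm
    subst this; simp
  | succ m ih =>
    rcases Nat.lt_or_ge k (m+1) with h | h
    · have hk : k ≤ m := by omega
      rw [step_const (show m < n by omega) F (hF.mono hk), ih hk (by omega)]
      rw [show m + 1 - k = (m - k) + 1 by omega, pow_succ, mul_inv]
      ring
    · have : k = m + 1 := by omega
      subst this; simp

lemma W_total : ∑ a : Fin n → A, ∑ b : Fin n → B, W α β s n a b = 1 := by
  have h0 : DepLt n 0 (fun (_ : Fin n → A) (_ : Fin n → B) => (1:ℝ)) := fun _ _ _ _ _ _ => rfl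
  have hit := iterate (α := α) (β := β) (s := s) (Nat.zero_le n) le_rfl
    (fun (_ : Fin n → A) (_ : Fin n → B) => (1:ℝ)) h0
  simp only [mul_one, Nat.sub_zero] at hit
  rw [hit]
  have hW0 : ∀ (a : Fin n → A) (b : Fin n → B), W α β s 0 a b = 1 := by
    intro a b; unfold W; simp
  rw [Finset.sum_congr rfl fun a _ => Finset.sum_congr rfl fun b _ => hW0 a b]
  simp only [Finset.sum_const, Finset.card_univ, nsmul_eq_mul, mul_one]
  rw [Fintype.card_fun, Fintype.card_fun, Fintype.card_fin]
  push_cast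
  rw [← mul_pow]
  exact inv_mul_cancel₀ (pow_ne_zero _ (ne_of_gt cardAB_pos))

end Step

end Chunk2


section Chunk4
variable {S A B : Type*} [Fintype S] [Fintype A] [Fintype B]
variable [Nonempty S] [Nonempty A] [Nonempty B]
variable {n : ℕ}

/-- Cumulative vector payoff over stages `< m`. -/
noncomputable def Rsum (g : S → A → B → ℝ) (m : ℕ) (a : Fin n → A) (b : Fin n → B)
    (t : S) : ℝ :=
  ∑ i : Fin n, if (i : ℕ) < m then g t (a i) (b i) else 0

/-- Shortfall of the cumulative payoff w.r.t. target `w` per stage. -/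
noncomputable def short (g : S → A → B → ℝ) (w : ℝ) (m : ℕ) (a : Fin n → A) (b : Fin n → B)
    (t : S) : ℝ :=
  max ((m : ℝ) * w - Rsum g m a b t) 0

/-- Blackwell potential. -/
noncomputable def Phi (g : S → A → B → ℝ) (w : ℝ) (m : ℕ) (a : Fin n → A) (b : Fin n → B) : ℝ :=
  ∑ t : S, (short g w m a b t) ^ 2

lemma short_nonneg (g : S → A → B → ℝ) (w : ℝ) (m : ℕ) (a : Fin n → A) (b : Fin n → B) (t : S) :
    0 ≤ short g w m a b t := le_max_right _ _

lemma Phi_nonneg (g : S → A → B → ℝ) (w : ℝ) (m : ℕ) (a : Fin n → A) (b : Fin n → B) :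
    0 ≤ Phi g w m a b := Finset.sum_nonneg fun t _ => sq_nonneg _

lemma Rsum_agree (g : S → A → B → ℝ) (m : ℕ) {a a' : Fin n → A} {b b' : Fin n → B}
    (ha : ∀ j : Fin n, (j : ℕ) < m → a j = a' j) (hb : ∀ j : Fin n, (j : ℕ) < m → b j = b' j)
    (t : S) : Rsum g m a b t = Rsum g m a' b' t := by
  refine Finset.sum_congr rfl fun j _ => ?_
  by_cases hj : (j : ℕ) < m
  · simp [hj, ha j hj, hb j hj]
  · simp [hj]

lemma short_agree (g : S → A → B → ℝ) (w : ℝ) (m : ℕ) {a a' : Fin n → A} {b b' : Fin n → B}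
    (ha : ∀ j : Fin n, (j : ℕ) < m → a j = a' j) (hb : ∀ j : Fin n, (j : ℕ) < m → b j = b' j)
    (t : S) : short g w m a b t = short g w m a' b' t := by
  unfold short
  rw [Rsum_agree g m ha hb t]

lemma Rsum_succ (g : S → A → B → ℝ) {m : ℕ} (hm : m < n) (a : Fin n → A) (b : Fin n → B)
    (t : S) : Rsum g (m+1) a b t = Rsum g m a b t + g t (a ⟨m, hm⟩) (b ⟨m, hm⟩) := by
  unfold Rsum
  have h1 : ∀ i : Fin n, (if (i : ℕ) < m + 1 then g t (a i) (b i) else 0)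
      = (if (i : ℕ) < m then g t (a i) (b i) else 0) +
        (if i = ⟨m, hm⟩ then g t (a i) (b i) else 0) := by
    intro i
    rcases lt_trichotomy (i : ℕ) m with h | h | h
    · have : i ≠ ⟨m, hm⟩ := fun he => Nat.lt_irrefl m (by simpa [he] using h)
      simp [h, h.trans (Nat.lt_succ_self m), this]
    · have : i = ⟨m, hm⟩ := Fin.ext h
      simp [this, Nat.lt_irrefl, Nat.lt_succ_self]
    · have h2 : ¬ (i : ℕ) < m + 1 := by omega
      have h3 : ¬ (i : ℕ) < m := by omega
      have : i ≠ ⟨m, hm⟩ := fun he => Nat.lt_irrefl m (by simpa [he] using h)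
      simp [h2, h3, this]
  rw [Finset.sum_congr rfl fun i _ => h1 i, Finset.sum_add_distrib]
  congr 1
  simpa using Finset.sum_ite_eq' Finset.univ (⟨m, hm⟩ : Fin n) (fun i => g t (a i) (b i))

lemma Rsum_zero (g : S → A → B → ℝ) (a : Fin n → A) (b : Fin n → B) (t : S) :
    Rsum g 0 a b t = 0 := by
  unfold Rsum; simp

lemma Phi_zero (g : S → A → B → ℝ) (w : ℝ) (a : Fin n → A) (b : Fin n → B) :
    Phi g w 0 a b = 0 := by
  unfold Phi short
  refine Finset.sum_eq_zero fun t _ => ?_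
  rw [Rsum_zero]
  norm_num

/-- Alice's stage mixed action given a shortfall vector `d`. -/
noncomputable def xOf (g : S → A → B → ℝ) (d : S → ℝ) : A → ℝ :=
  if h : (∀ t, 0 ≤ d t) ∧ 0 < ∑ t, d t then
    Classical.choose (optExists g (fun t => (∑ u, d u)⁻¹ * d t)
      (fun t => mul_nonneg (inv_nonneg.mpr h.2.le) (h.1 t))
      (by rw [← Finset.mul_sum]; exact inv_mul_cancel₀ (ne_of_gt h.2)))
  else unif A

lemma xOf_nonneg (g : S → A → B → ℝ) (d : S → ℝ) (x : A) : 0 ≤ xOf g d x := by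
  unfold xOf
  split
  · next h =>
    exact (Classical.choose_spec (optExists g (fun t => (∑ u, d u)⁻¹ * d t)
      (fun t => mul_nonneg (inv_nonneg.mpr h.2.le) (h.1 t))
      (by rw [← Finset.mul_sum]; exact inv_mul_cancel₀ (ne_of_gt h.2)))).1 x
  · exact unif_nonneg x

lemma xOf_sum_one (g : S → A → B → ℝ) (d : S → ℝ) : ∑ x : A, xOf g d x = 1 := by
  unfold xOf
  split
  · next h =>
    exact (Classical.choose_spec (optExists g (fun t => (∑ u, d u)⁻¹ * d t)
      (fun t => mul_nonneg (inv_nonneg.mpr h.2.le) (h.1 t))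
      (by rw [← Finset.mul_sum]; exact inv_mul_cancel₀ (ne_of_gt h.2)))).2.1
  · exact unif_sum_one

lemma xOf_key (g : S → A → B → ℝ) {w : ℝ}
    (hw : ∀ q : S → ℝ, (∀ t, 0 ≤ q t) → (∑ t, q t) = 1 → w ≤ uVal g q)
    (d : S → ℝ) (hd : ∀ t, 0 ≤ d t) (y : B) :
    (∑ t, d t) * w ≤ ∑ t : S, d t * (∑ x : A, xOf g d x * g t x y) := by
  by_cases hpos : 0 < ∑ t, d t
  · have hq0 : ∀ t, 0 ≤ (∑ u, d u)⁻¹ * d t := fun t => mul_nonneg (inv_nonneg.mpr hpos.le) (hd t)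
    have hq1 : ∑ t, (∑ u, d u)⁻¹ * d t = 1 := by
      rw [← Finset.mul_sum]; exact inv_mul_cancel₀ (ne_of_gt hpos)
    have hxe : xOf g d = Classical.choose (optExists g (fun t => (∑ u, d u)⁻¹ * d t) hq0 hq1) := by
      unfold xOf
      rw [dif_pos ⟨hd, hpos⟩]
    rw [hxe]
    obtain ⟨h1, h2, h3⟩ := Classical.choose_spec (optExists g (fun t => (∑ u, d u)⁻¹ * d t) hq0 hq1)
    set x := Classical.choose (optExists g (fun t => (∑ u, d u)⁻¹ * d t) hq0 hq1) with hx
    have hu := (hw _ hq0 hq1).trans (h3 y)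
    have e1 : ∑ t : S, ∑ a : A, ((∑ u, d u)⁻¹ * d t) * x a * g t a y
        = (∑ u, d u)⁻¹ * ∑ t : S, d t * (∑ a : A, x a * g t a y) := by
      rw [Finset.mul_sum]
      refine Finset.sum_congr rfl fun t _ => ?_
      rw [Finset.mul_sum, Finset.mul_sum]
      refine Finset.sum_congr rfl fun a _ => ?_
      ring
    rw [e1] at hu
    have h5 := mul_le_mul_of_nonneg_left hu hpos.le
    rwa [mul_inv_cancel_left₀ (ne_of_gt hpos)] at h5
  · have hz : ∑ t, d t = 0 :=
      le_antisymm (not_lt.mp hpos) (Finset.sum_nonneg fun t _ => hd t)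
    have hdz : ∀ t, d t = 0 := fun t =>
      (Finset.sum_eq_zero_iff_of_nonneg (fun t _ => hd t)).mp hz t (mem_univ t)
    rw [hz, zero_mul]
    refine le_of_eq (Finset.sum_eq_zero fun t _ => ?_).symm
    rw [hdz t, zero_mul]

/-- Alice's Blackwell strategy. -/
noncomputable def alice (g : S → A → B → ℝ) (w : ℝ) (n : ℕ) : BehavStrategy A B Unit A n where
  prob i a b _ x := xOf g (fun t => short g w (i : ℕ) a b t) x
  nonneg i a b si x := xOf_nonneg g _ x
  sum_one i a b si := xOf_sum_one g _
  causal i a a' b b' si ha hb := by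
    have hsh : (fun t => short g w (i : ℕ) a b t) = (fun t => short g w (i : ℕ) a' b' t) := by
      funext t
      exact short_agree g w (i : ℕ) ha hb t
    simp only [hsh]

end Chunk4

section Chunk5
variable {S A B : Type*} [Fintype S] [Fintype A] [Fintype B]
variable [Nonempty S] [Nonempty A] [Nonempty B]
variable {n : ℕ}

lemma drift_nonpos (g : S → A → B → ℝ) {w : ℝ}
    (hw : ∀ q : S → ℝ, (∀ t, 0 ≤ q t) → (∑ t, q t) = 1 → w ≤ uVal g q)
    (β : BehavStrategy A B S B n) (s : S) (k : Fin n) :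
    ∑ a : Fin n → A, ∑ b : Fin n → B, W (alice g w n) β s n a b *
      (∑ t : S, short g w (k : ℕ) a b t * (w - g t (a k) (b k))) ≤ 0 := by
  set α := alice g w n with hα
  set F : (Fin n → A) → (Fin n → B) → ℝ :=
    fun a b => ∑ t : S, short g w (k : ℕ) a b t * (w - g t (a k) (b k)) with hF
  have hdep : DepLt n ((k : ℕ) + 1) F := by
    intro a a' b b' ha hb
    refine Finset.sum_congr rfl fun t _ => ?_
    have h1 : ∀ j : Fin n, (j : ℕ) < (k : ℕ) → a j = a' j :=
      fun j hj => ha j (hj.trans (Nat.lt_succ_self _))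
    have h2 : ∀ j : Fin n, (j : ℕ) < (k : ℕ) → b j = b' j :=
      fun j hj => hb j (hj.trans (Nat.lt_succ_self _))
    rw [short_agree g w (k : ℕ) h1 h2 t, ha k (Nat.lt_succ_self _), hb k (Nat.lt_succ_self _)]
  have hiter := iterate (α := α) (β := β) (s := s) (Nat.succ_le_of_lt k.isLt) le_rfl F hdep
  rw [hiter]
  refine mul_nonpos_iff.mpr (Or.inl ⟨inv_nonneg.mpr (pow_nonneg cardAB_pos.le _), ?_⟩)
  rw [step (k.isLt) F]
  refine mul_nonpos_iff.mpr (Or.inl ⟨inv_nonneg.mpr cardAB_pos.le, ?_⟩)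
  refine Finset.sum_nonpos fun a _ => Finset.sum_nonpos fun b _ => ?_
  refine mul_nonpos_iff.mpr (Or.inl ⟨W_nonneg _ _ _, ?_⟩)
  -- inner sum ≤ 0
  set d : S → ℝ := fun t => short g w (k : ℕ) a b t with hd
  have hd0 : ∀ t, 0 ≤ d t := fun t => short_nonneg g w _ a b t
  have hFupd : ∀ (x : A) (y : B),
      F (Function.update a ⟨(k : ℕ), k.isLt⟩ x) (Function.update b ⟨(k : ℕ), k.isLt⟩ y)
        = ∑ t : S, d t * (w - g t x y) := by
    intro x y
    have hkk : (⟨(k : ℕ), k.isLt⟩ : Fin n) = k := Fin.eta k k.isLt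
    rw [hkk]
    have hagA : ∀ j : Fin n, (j : ℕ) < (k : ℕ) → Function.update a k x j = a j := by
      intro j hj
      have : j ≠ k := by intro he; rw [he] at hj; exact Nat.lt_irrefl _ hj
      exact Function.update_of_ne this _ _
    have hagB : ∀ j : Fin n, (j : ℕ) < (k : ℕ) → Function.update b k y j = b j := by
      intro j hj
      have : j ≠ k := by intro he; rw [he] at hj; exact Nat.lt_irrefl _ hj
      exact Function.update_of_ne this _ _
    refine Finset.sum_congr rfl fun t _ => ?_
    rw [short_agree g w (k : ℕ) hagA hagB t, Function.update_self, Function.update_self]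
  have hprobα : ∀ (x : A), α.prob ⟨(k : ℕ), k.isLt⟩ a b () x = xOf g d x := fun x => rfl
  calc ∑ x : A, ∑ y : B, α.prob ⟨(k : ℕ), k.isLt⟩ a b () x * β.prob ⟨(k : ℕ), k.isLt⟩ a b s y *
        F (Function.update a ⟨(k : ℕ), k.isLt⟩ x) (Function.update b ⟨(k : ℕ), k.isLt⟩ y)
      = ∑ y : B, ∑ x : A, xOf g d x * β.prob ⟨(k : ℕ), k.isLt⟩ a b s y *
          (∑ t : S, d t * (w - g t x y)) := by
        rw [Finset.sum_comm]
        exact Finset.sum_congr rfl fun y _ => Finset.sum_congr rfl fun x _ => by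
          rw [hprobα x, hFupd x y]
    _ = ∑ y : B, β.prob ⟨(k : ℕ), k.isLt⟩ a b s y *
          ((∑ t, d t) * w - ∑ t : S, d t * (∑ x : A, xOf g d x * g t x y)) := by
        refine Finset.sum_congr rfl fun y _ => ?_
        have expand : ∀ x : A, ∑ t : S, d t * (w - g t x y)
            = (∑ t, d t) * w - ∑ t : S, d t * g t x y := by
          intro x
          rw [Finset.sum_mul, ← Finset.sum_sub_distrib]
          exact Finset.sum_congr rfl fun t _ => by ring
        have e4 : ∑ x : A, xOf g d x * ∑ t : S, d t * g t x y
            = ∑ t : S, d t * ∑ x : A, xOf g d x * g t x y := by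
          have l1 : ∀ x : A, xOf g d x * ∑ t : S, d t * g t x y
              = ∑ t : S, xOf g d x * (d t * g t x y) := fun x => Finset.mul_sum _ _ _
          have l2 : ∀ t : S, d t * ∑ x : A, xOf g d x * g t x y
              = ∑ x : A, xOf g d x * (d t * g t x y) := by
            intro t
            rw [Finset.mul_sum]
            exact Finset.sum_congr rfl fun x _ => by ring
          rw [Finset.sum_congr rfl fun x _ => l1 x, Finset.sum_congr rfl fun t _ => l2 t,
            Finset.sum_comm]
        have l0 : ∀ x : A, xOf g d x * β.prob ⟨(k : ℕ), k.isLt⟩ a b s y *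
              ((∑ t, d t) * w - ∑ t : S, d t * g t x y)
            = β.prob ⟨(k : ℕ), k.isLt⟩ a b s y *
              (xOf g d x * ((∑ t, d t) * w) - xOf g d x * (∑ t : S, d t * g t x y)) :=
          fun x => by ring
        rw [Finset.sum_congr rfl fun x _ => by rw [expand x, l0 x], ← Finset.mul_sum,
          Finset.sum_sub_distrib, ← Finset.sum_mul, xOf_sum_one, one_mul, e4]
    _ ≤ 0 := by
        refine Finset.sum_nonpos fun y _ => ?_
        refine mul_nonpos_iff.mpr (Or.inl ⟨β.nonneg _ _ _ _ _, sub_nonpos.mpr ?_⟩)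
        exact xOf_key g hw d hd0 y

end Chunk5

section Chunk6
variable {S A B : Type*} [Fintype S] [Fintype A] [Fintype B]
variable [Nonempty S] [Nonempty A] [Nonempty B]
variable {n : ℕ}

lemma Phi_succ_le (g : S → A → B → ℝ) {G w : ℝ} (hG : ∀ s a b, |g s a b| ≤ G)
    {m : ℕ} (hm : m < n) (a : Fin n → A) (b : Fin n → B) :
    Phi g w (m+1) a b ≤ Phi g w m a b +
      2 * (∑ t : S, short g w m a b t * (w - g t (a ⟨m, hm⟩) (b ⟨m, hm⟩))) +
      (Fintype.card S : ℝ) * (|w| + G)^2 := by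
  have key : ∀ t : S, (short g w (m+1) a b t)^2
      ≤ (short g w m a b t)^2 +
        2 * (short g w m a b t * (w - g t (a ⟨m, hm⟩) (b ⟨m, hm⟩))) + (|w| + G)^2 := by
    intro t
    set c : ℝ := w - g t (a ⟨m, hm⟩) (b ⟨m, hm⟩) with hc
    have harg : ((m:ℕ)+1 : ℝ) * w - Rsum g (m+1) a b t
        = ((m : ℝ) * w - Rsum g m a b t) + c := by
      rw [Rsum_succ g hm a b t, hc]; push_cast; ring
    have h1 : short g w (m+1) a b t ≤ |short g w m a b t + c| := by
      unfold short
      rw [show ((m+1 : ℕ) : ℝ) * w - Rsum g (m+1) a b t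
          = ((m : ℝ) * w - Rsum g m a b t) + c from by push_cast at harg ⊢; linarith]
      refine max_le ?_ (abs_nonneg _)
      refine le_trans ?_ (le_abs_self _)
      have := le_max_left ((m : ℝ) * w - Rsum g m a b t) 0
      linarith
    have h2 : (short g w (m+1) a b t)^2 ≤ (short g w m a b t + c)^2 := by
      calc (short g w (m+1) a b t)^2 ≤ |short g w m a b t + c|^2 :=
            pow_le_pow_left₀ (short_nonneg g w _ a b t) h1 2
        _ = (short g w m a b t + c)^2 := sq_abs _
    have h3 : c^2 ≤ (|w| + G)^2 := by
      have habs : |c| ≤ |w| + G := by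
        refine (abs_sub _ _).trans ?_
        exact add_le_add le_rfl (hG t _ _)
      calc c^2 = |c|^2 := (sq_abs c).symm
        _ ≤ (|w| + G)^2 := pow_le_pow_left₀ (abs_nonneg c) habs 2
    nlinarith [h2, h3]
  calc Phi g w (m+1) a b
      ≤ ∑ t : S, ((short g w m a b t)^2 +
          2 * (short g w m a b t * (w - g t (a ⟨m, hm⟩) (b ⟨m, hm⟩))) + (|w| + G)^2) :=
        Finset.sum_le_sum fun t _ => key t
    _ = Phi g w m a b +
        2 * (∑ t : S, short g w m a b t * (w - g t (a ⟨m, hm⟩) (b ⟨m, hm⟩))) +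
        (Fintype.card S : ℝ) * (|w| + G)^2 := by
        rw [Finset.sum_add_distrib, Finset.sum_add_distrib, ← Finset.mul_sum,
          Finset.sum_const, Finset.card_univ, nsmul_eq_mul]
        rfl

lemma exp_Phi_le (g : S → A → B → ℝ) {G w : ℝ} (hG : ∀ s a b, |g s a b| ≤ G)
    (hw : ∀ q : S → ℝ, (∀ t, 0 ≤ q t) → (∑ t, q t) = 1 → w ≤ uVal g q)
    (β : BehavStrategy A B S B n) (s : S) :
    ∀ m : ℕ, m ≤ n →
      ∑ a : Fin n → A, ∑ b : Fin n → B, W (alice g w n) β s n a b * Phi g w m a b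
        ≤ (m : ℝ) * ((Fintype.card S : ℝ) * (|w| + G)^2) := by
  intro m
  induction m with
  | zero =>
    intro _
    simp only [Nat.cast_zero, zero_mul]
    refine le_of_eq (Finset.sum_eq_zero fun a _ => Finset.sum_eq_zero fun b _ => ?_)
    rw [Phi_zero, mul_zero]
  | succ m ih =>
    intro hm1
    have hm : m < n := hm1
    set CC : ℝ := (Fintype.card S : ℝ) * (|w| + G)^2 with hCC
    have hCC0 : 0 ≤ CC := by positivity
    set Fm : (Fin n → A) → (Fin n → B) → ℝ :=
      fun a b => ∑ t : S, short g w m a b t * (w - g t (a ⟨m, hm⟩) (b ⟨m, hm⟩)) with hFm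
    have hstep : ∀ (a : Fin n → A) (b : Fin n → B),
        W (alice g w n) β s n a b * Phi g w (m+1) a b
          ≤ W (alice g w n) β s n a b * (Phi g w m a b + 2 * Fm a b + CC) :=
      fun a b => mul_le_mul_of_nonneg_left (Phi_succ_le g hG hm a b) (W_nonneg _ _ _)
    calc ∑ a : Fin n → A, ∑ b : Fin n → B, W (alice g w n) β s n a b * Phi g w (m+1) a b
        ≤ ∑ a : Fin n → A, ∑ b : Fin n → B,
            W (alice g w n) β s n a b * (Phi g w m a b + 2 * Fm a b + CC) :=
          Finset.sum_le_sum fun a _ => Finset.sum_le_sum fun b _ => hstep a b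
      _ = (∑ a : Fin n → A, ∑ b : Fin n → B, W (alice g w n) β s n a b * Phi g w m a b)
          + 2 * (∑ a : Fin n → A, ∑ b : Fin n → B, W (alice g w n) β s n a b * Fm a b)
          + CC * (∑ a : Fin n → A, ∑ b : Fin n → B, W (alice g w n) β s n a b) := by
          rw [Finset.mul_sum, Finset.mul_sum, ← Finset.sum_add_distrib, ← Finset.sum_add_distrib]
          refine Finset.sum_congr rfl fun a _ => ?_
          rw [Finset.mul_sum, Finset.mul_sum, ← Finset.sum_add_distrib, ← Finset.sum_add_distrib]
          refine Finset.sum_congr rfl fun b _ => by ring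
      _ ≤ (m : ℝ) * CC + 2 * 0 + CC * 1 := by
          have hd := drift_nonpos g hw β s (⟨m, hm⟩ : Fin n)
          have ht := W_total (α := alice g w n) (β := β) (s := s)
          have h1 := ih hm.le
          refine add_le_add (add_le_add h1 ?_) (le_of_eq (by rw [ht]))
          have : ∑ a : Fin n → A, ∑ b : Fin n → B, W (alice g w n) β s n a b * Fm a b ≤ 0 := hd
          linarith
      _ = ((m+1 : ℕ) : ℝ) * CC := by push_cast; ring

end Chunk6

section Chunk7
variable {S A B : Type*} [Fintype S] [Fintype A] [Fintype B]
variable [Nonempty S] [Nonempty A] [Nonempty B]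

/-- Bob's uniform strategy. -/
noncomputable def unifStrat (n : ℕ) : BehavStrategy A B S B n where
  prob _ _ _ _ y := unif B y
  nonneg _ _ _ _ y := unif_nonneg y
  sum_one _ _ _ _ := unif_sum_one
  causal _ _ _ _ _ _ _ _ := rfl

lemma inducedP_eq (p : S → ℝ) {n : ℕ} (α : BehavStrategy A B Unit A n)
    (β : BehavStrategy A B S B n) (s : S) (a : Fin n → A) (b : Fin n → B) :
    inducedP p (fun _ : S => ()) (id : S → S) α β s a b = p s * W α β s n a b := by
  unfold inducedP W stageC
  congr 1
  refine Finset.prod_congr rfl fun i _ => ?_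
  rw [if_pos i.isLt]
  rfl

lemma strongly (g : S → A → B → ℝ) (p : S → ℝ) (hp : ∀ s, 0 < p s) (hp1 : ∑ s, p s = 1)
    {G w : ℝ} (hG : ∀ s a b, |g s a b| ≤ G)
    (hw : ∀ q : S → ℝ, (∀ t, 0 ≤ q t) → (∑ t, q t) = 1 → w ≤ uVal g q)
    {δ : ℝ} (hδ : 0 < δ) :
    StronglyGuarantees g p (fun _ : S => ()) (id : S → S) (w - δ) := by
  intro ε hε
  set CC : ℝ := (Fintype.card S : ℝ) * (|w| + G)^2 with hCC
  have hCC0 : 0 ≤ CC := by positivity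
  obtain ⟨N, hN⟩ := exists_nat_gt (CC / (δ^2 * ε))
  refine ⟨N, fun n hn => ⟨alice g w n, fun β => ?_⟩⟩
  have hn0 : 0 < n := Nat.lt_of_le_of_lt (Nat.zero_le N) hn
  have hnR : (0:ℝ) < n := by exact_mod_cast hn0
  have hδ' : δ ≠ 0 := ne_of_gt hδ
  have hnR' : (n:ℝ) ≠ 0 := ne_of_gt hnR
  set α := alice g w n with hαdef
  have hexp := fun s_ : S => exp_Phi_le g hG hw β s_ n le_rfl
  calc probBelow g p (fun _ : S => ()) (id : S → S) α β (w - δ)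
      ≤ ∑ s : S, ∑ a : Fin n → A, ∑ b : Fin n → B,
          p s * (W α β s n a b * (Phi g w n a b / ((n:ℝ) * δ)^2)) := by
        unfold probBelow
        refine Finset.sum_le_sum fun s _ => Finset.sum_le_sum fun a _ =>
          Finset.sum_le_sum fun b _ => ?_
        have hW0 := W_nonneg (α := α) (β := β) (s := s) n a b
        have hPhi0 := Phi_nonneg g w n a b
        split
        · next hlt =>
          rw [inducedP_eq]
          have hR : Rsum g n a b s = ∑ i, g s (a i) (b i) :=
            Finset.sum_congr rfl fun i _ => if_pos i.isLt
          have h2 : (n:ℝ) * δ ≤ short g w n a b s := by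
            unfold avgPay at hlt
            have h2' : (n:ℝ)*δ ≤ (n:ℝ) * w - Rsum g n a b s := by
              rw [hR]
              have h2'' := (mul_lt_mul_iff_right₀ hnR).mpr hlt
              rw [← mul_assoc, mul_inv_cancel₀ hnR', one_mul] at h2''
              nlinarith
            exact le_trans h2' (le_max_left _ _)
          have h3 : ((n:ℝ)*δ)^2 ≤ Phi g w n a b := by
            refine le_trans ?_ (Finset.single_le_sum (f := fun t => (short g w n a b t)^2)
              (fun t _ => sq_nonneg _) (Finset.mem_univ s))
            exact pow_le_pow_left₀ (by positivity) h2 2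
          have h4 : (1:ℝ) ≤ Phi g w n a b / ((n:ℝ)*δ)^2 := (one_le_div (by positivity)).mpr h3
          calc p s * W α β s n a b
              ≤ p s * W α β s n a b * (Phi g w n a b / ((n:ℝ)*δ)^2) :=
                le_mul_of_one_le_right (mul_nonneg (hp s).le hW0) h4
            _ = p s * (W α β s n a b * (Phi g w n a b / ((n:ℝ)*δ)^2)) := by ring
        · next =>
          exact mul_nonneg (hp s).le (mul_nonneg hW0 (div_nonneg hPhi0 (sq_nonneg _)))
    _ = ∑ s : S, p s * ((∑ a : Fin n → A, ∑ b : Fin n → B, W α β s n a b * Phi g w n a b)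
          / ((n:ℝ)*δ)^2) := by
        refine Finset.sum_congr rfl fun s _ => ?_
        rw [Finset.sum_div, Finset.mul_sum]
        refine Finset.sum_congr rfl fun a _ => ?_
        rw [Finset.sum_div, Finset.mul_sum]
        refine Finset.sum_congr rfl fun b _ => ?_
        ring
    _ ≤ ∑ s : S, p s * (((n:ℝ) * CC) / ((n:ℝ)*δ)^2) := by
        refine Finset.sum_le_sum fun s _ => ?_
        refine mul_le_mul_of_nonneg_left ?_ (hp s).le
        exact (div_le_div_iff_of_pos_right (by positivity)).mpr (hexp s)
    _ = ((n:ℝ) * CC) / ((n:ℝ)*δ)^2 := by rw [← Finset.sum_mul, hp1, one_mul]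
    _ = CC / ((n:ℝ) * δ^2) := by
        field_simp
    _ < ε := by
        rw [div_lt_iff₀ (by positivity)]
        rw [div_lt_iff₀ (by positivity)] at hN
        have h6 : (N:ℝ) ≤ (n:ℝ) := by exact_mod_cast hn.le
        nlinarith [mul_le_mul_of_nonneg_right h6 (show (0:ℝ) ≤ δ^2*ε by positivity)]

lemma sg_le (g : S → A → B → ℝ) (p : S → ℝ) (hp1 : ∑ s, p s = 1)
    {G : ℝ} (hG : ∀ s a b, |g s a b| ≤ G) {v : ℝ}
    (hv : StronglyGuarantees g p (fun _ : S => ()) (id : S → S) v) : v ≤ G := by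
  by_contra hv'
  push_neg at hv'
  obtain ⟨N, hN⟩ := hv 1 one_pos
  obtain ⟨α, hα⟩ := hN (N+1) (Nat.lt_succ_self N)
  have h1 := hα (unifStrat (N+1))
  have h2 : probBelow g p (fun _ : S => ()) (id : S → S) α (unifStrat (N+1)) v = 1 := by
    unfold probBelow
    have hav : ∀ (s : S) (a : Fin (N+1) → A) (b : Fin (N+1) → B), avgPay g s a b < v := by
      intro s a b
      unfold avgPay
      have hsum : ∑ i : Fin (N+1), g s (a i) (b i) ≤ ((N+1 : ℕ):ℝ) * G := by
        calc ∑ i : Fin (N+1), g s (a i) (b i) ≤ ∑ _i : Fin (N+1), G :=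
              Finset.sum_le_sum fun i _ => (abs_le.mp (hG s _ _)).2
          _ = ((N+1 : ℕ):ℝ) * G := by
              rw [Finset.sum_const, Finset.card_univ, Fintype.card_fin, nsmul_eq_mul]
      have hpos : (0:ℝ) < ((N+1 : ℕ):ℝ) := by positivity
      have hle : ((N+1:ℕ):ℝ)⁻¹ * ∑ i : Fin (N+1), g s (a i) (b i) ≤ G := by
        rw [inv_mul_le_iff₀ hpos]
        calc ∑ i : Fin (N+1), g s (a i) (b i) ≤ ((N+1 : ℕ):ℝ) * G := hsum
          _ = ((N+1 : ℕ):ℝ) * G := rfl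
      exact lt_of_le_of_lt hle hv'
    rw [Finset.sum_congr rfl fun s _ => Finset.sum_congr rfl fun a _ =>
      Finset.sum_congr rfl fun b _ => if_pos (hav s a b)]
    have hps : ∀ s : S, ∑ a : Fin (N+1) → A, ∑ b : Fin (N+1) → B,
        inducedP p (fun _ : S => ()) (id : S → S) α (unifStrat (N+1)) s a b = p s := by
      intro s
      rw [Finset.sum_congr rfl fun a _ => Finset.sum_congr rfl fun b _ =>
        inducedP_eq p α (unifStrat (N+1)) s a b]
      rw [Finset.sum_congr rfl fun a _ => (Finset.mul_sum _ _ _).symm, ← Finset.mul_sum,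
        W_total, mul_one]
    rw [Finset.sum_congr rfl fun s _ => hps s, hp1]
  linarith

end Chunk7

-- CHUNK8 --

/-- `v_sup^s(p, ∅, 𝟙) ≥ inf { u(q) : q a probability distribution on 𝒮 }`. -/
theorem stmt6 {S A B : Type*} [Fintype S] [Fintype A] [Fintype B]
    [Nonempty S] [Nonempty A] [Nonempty B]
    (g : S → A → B → ℝ) (p : S → ℝ) (hp : ∀ s, 0 < p s) (hp1 : ∑ s, p s = 1) :
    (⨅ q : {q : S → ℝ // (∀ s, 0 ≤ q s) ∧ ∑ s, q s = 1}, uVal g q.1) ≤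
      vsupS g p (fun _ : S => ()) (id : S → S) := by
  obtain ⟨G0, hG0⟩ := Finite.exists_le (fun z : S × A × B => |g z.1 z.2.1 z.2.2|)
  set G := max G0 0 with hGdef
  have hG : ∀ s a b, |g s a b| ≤ G := fun s a b => le_trans (hG0 (s, a, b)) (le_max_left _ _)
  set w := ⨅ q : {q : S → ℝ // (∀ s, 0 ≤ q s) ∧ ∑ s, q s = 1}, uVal g q.1 with hwdef
  have hw : ∀ q : S → ℝ, (∀ t, 0 ≤ q t) → (∑ t, q t) = 1 → w ≤ uVal g q := by
    intro q h1 h2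
    exact ciInf_le (f := fun q : {q : S → ℝ // (∀ s, 0 ≤ q s) ∧ ∑ s, q s = 1} => uVal g q.1)
      ⟨-G, by rintro y ⟨x, rfl⟩; exact uVal_ge hG x.2.1 x.2.2⟩ ⟨q, h1, h2⟩
  have hbdd : BddAbove {v : ℝ | StronglyGuarantees g p (fun _ : S => ()) (id : S → S) v} :=
    ⟨G, fun v hv => sg_le g p hp1 hG hv⟩
  have hmem : ∀ δ : ℝ, 0 < δ → w - δ ≤ vsupS g p (fun _ : S => ()) (id : S → S) := by
    intro δ hδ
    exact le_csSup hbdd (strongly g p hp hp1 hG hw hδ)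
  by_contra hcon
  push_neg at hcon
  have hfin := hmem ((w - vsupS g p (fun _ : S => ()) (id : S → S))/2) (by linarith)
  linarith
end
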